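/- Define a(t) := t + (3/20)·sin(200·t), b(t) := (455/451)·cos(5·t) + (120/451)·cos(5·t)·cos(200·t), and c(t) := sin(5·t) + (459/5863)·sin(195·t) + (1377/18491)·sin(205·t) + (180/35629)·sin(395·t) + (20/4059)·sin(405·t). Then c'(t) = b(t)·a'(t) for all t ∈ ℝ; that is, the curve (a, b, c) is a smooth Legendrian curve for the standard contact structure on ℝ³. -/

import Mathlib

open Real Set

private lemma sin_deriv (k t : ℝ) :
    HasDerivAt (fun t : ℝ => Real.sin (k * t)) (k * Real.cos (k * t)) t := by
  have h := (Real.hasDerivAt_sin (k * t)).comp t ((hasDerivAt_id t).const_mul k)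
  simp only [mul_one] at h
  rw [mul_comm]
  exact h

/-- The explicit Legendrian approximation of the helix `t ↦ (t, cos(5t), sin(5t))`:
the curve `(a, b, c)` below is a smooth Legendrian curve for the standard contact structure on
`ℝ³`, i.e. `c'(t) = b(t)·a'(t)` for all `t`. -/
theorem legendrian_helix
    (a b c : ℝ → ℝ)
    (ha : ∀ t : ℝ, a t = t + 3 / 20 * Real.sin (200 * t))
    (hb : ∀ t : ℝ, b t = 455 / 451 * Real.cos (5 * t) +
      120 / 451 * Real.cos (5 * t) * Real.cos (200 * t))
    (hc : ∀ t : ℝ, c t = Real.sin (5 * t) + 459 / 5863 * Real.sin (195 * t) +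
      1377 / 18491 * Real.sin (205 * t) + 180 / 35629 * Real.sin (395 * t) +
      20 / 4059 * Real.sin (405 * t)) :
    ContDiff ℝ (⊤ : ℕ∞) a ∧ ContDiff ℝ (⊤ : ℕ∞) b ∧ ContDiff ℝ (⊤ : ℕ∞) c ∧
    ∀ t : ℝ, deriv c t = b t * deriv a t := by
  have ha' : a = fun t => t + 3 / 20 * Real.sin (200 * t) := funext ha
  have hb' : b = fun t => 455 / 451 * Real.cos (5 * t) +
      120 / 451 * Real.cos (5 * t) * Real.cos (200 * t) := funext hb
  have hc' : c = fun t => Real.sin (5 * t) + 459 / 5863 * Real.sin (195 * t) +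
      1377 / 18491 * Real.sin (205 * t) + 180 / 35629 * Real.sin (395 * t) +
      20 / 4059 * Real.sin (405 * t) := funext hc
  subst ha' hb' hc'
  have hs : ∀ k : ℝ, ContDiff ℝ (⊤ : ℕ∞) (fun t : ℝ => Real.sin (k * t)) := fun k =>
    Real.contDiff_sin.comp (contDiff_const.mul contDiff_id)
  have hco : ∀ k : ℝ, ContDiff ℝ (⊤ : ℕ∞) (fun t : ℝ => Real.cos (k * t)) := fun k =>
    Real.contDiff_cos.comp (contDiff_const.mul contDiff_id)
  refine ⟨contDiff_id.add (contDiff_const.mul (hs 200)),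
    (contDiff_const.mul (hco 5)).add ((contDiff_const.mul (hco 5)).mul (hco 200)),
    (((((hs 5).add (contDiff_const.mul (hs 195))).add (contDiff_const.mul (hs 205))).add
      (contDiff_const.mul (hs 395))).add (contDiff_const.mul (hs 405))),
    fun t => ?_⟩
  have hda : HasDerivAt (fun t : ℝ => t + 3 / 20 * Real.sin (200 * t))
      (1 + 3 / 20 * (200 * Real.cos (200 * t))) t :=
    (hasDerivAt_id t).add ((sin_deriv 200 t).const_mul (3 / 20))
  have hdc : HasDerivAt (fun t : ℝ => Real.sin (5 * t) + 459 / 5863 * Real.sin (195 * t) +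
      1377 / 18491 * Real.sin (205 * t) + 180 / 35629 * Real.sin (395 * t) +
      20 / 4059 * Real.sin (405 * t))
      (5 * Real.cos (5 * t) + 459 / 5863 * (195 * Real.cos (195 * t)) +
        1377 / 18491 * (205 * Real.cos (205 * t)) + 180 / 35629 * (395 * Real.cos (395 * t)) +
        20 / 4059 * (405 * Real.cos (405 * t))) t :=
    ((((sin_deriv 5 t).add ((sin_deriv 195 t).const_mul (459 / 5863))).add
      ((sin_deriv 205 t).const_mul (1377 / 18491))).add
      ((sin_deriv 395 t).const_mul (180 / 35629))).add
      ((sin_deriv 405 t).const_mul (20 / 4059))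
  rw [hdc.deriv, hda.deriv]
  have h195 : (195 : ℝ) * t = 200 * t - 5 * t := by ring
  have h205 : (205 : ℝ) * t = 200 * t + 5 * t := by ring
  have h395 : (395 : ℝ) * t = (2 * (200 * t)) - 5 * t := by ring
  have h405 : (405 : ℝ) * t = (2 * (200 * t)) + 5 * t := by ring
  rw [h195, h205, h395, h405, Real.cos_sub, Real.cos_add, Real.cos_sub, Real.cos_add,
    Real.cos_two_mul, Real.sin_two_mul]
  ring
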